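/- Let Lap be the Laplacian of a connected graph with eigenvalues 0 = λ_1 < λ_2 ≤ ... ≤ λ_n, λ_2 < λ_n, and let c_1 = (1 + λ_2/λ_n)/(1 − λ_2/λ_n), c_2 = 2/((1 + λ_2/λ_n)λ_n). Then the condition number of P_k(c_2·Lap) restricted to (span{1_n})^⊥, namely (max over nonzero eigenvalues of P_k(c_2 Lap))/(min over nonzero eigenvalues), is at most (1 + 1/T_k(c_1))/(1 − 1/T_k(c_1)). -/

import Mathlib

/-- Chebyshev polynomials of the first kind, evaluated in any ring. -/
def chebR {R : Type*} [Ring R] : ℕ → R → R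
  | 0, _ => 1
  | 1, x => x
  | (k + 2), x => 2 * x * chebR (k + 1) x - chebR k x

lemma chebR_cos (θ : ℝ) : ∀ k : ℕ, chebR k (Real.cos θ) = Real.cos (k * θ) := by
  intro k
  induction k using Nat.strong_induction_on with
  | _ k ih =>
    match k with
    | 0 => simp [chebR]
    | 1 => simp [chebR]
    | (m+2) =>
      rw [show chebR (m+2) (Real.cos θ) = 2 * Real.cos θ * chebR (m+1) (Real.cos θ)
            - chebR m (Real.cos θ) from rfl,
        ih (m+1) (by omega), ih m (by omega)]
      push_cast
      rw [show ((m:ℝ)+2)*θ = ((m+1)*θ + θ) by ring, Real.cos_add,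
        show (m:ℝ)*θ = ((m+1)*θ - θ) by ring, Real.cos_sub]
      ring

lemma abs_chebR_le {t : ℝ} (h1 : -1 ≤ t) (h2 : t ≤ 1) (k : ℕ) : |chebR k t| ≤ 1 := by
  have : t = Real.cos (Real.arccos t) := (Real.cos_arccos h1 h2).symm
  rw [this, chebR_cos]
  exact Real.abs_cos_le_one _

lemma chebR_pair {x : ℝ} (hx : 1 ≤ x) : ∀ k : ℕ, 1 ≤ chebR k x ∧ chebR k x ≤ chebR (k+1) x := by
  intro k
  induction k with
  | zero => constructor <;> simp [chebR] <;> linarith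
  | succ m ih =>
    obtain ⟨h1, h2⟩ := ih
    have h3 : chebR (m+2) x = 2 * x * chebR (m+1) x - chebR m x := rfl
    constructor
    · linarith
    · rw [h3]; nlinarith

lemma le_chebR {x : ℝ} (hx : 1 ≤ x) {k : ℕ} (hk : 1 ≤ k) : x ≤ chebR k x := by
  induction k with
  | zero => omega
  | succ m ih =>
    rcases Nat.eq_or_lt_of_le hk with h | h
    · rw [show m + 1 = 1 by omega]; simp [chebR]
    · exact le_trans (ih (by omega)) (chebR_pair hx m).2

open Matrix in
lemma chebR_conj {n : ℕ} (U V : Matrix (Fin n) (Fin n) ℝ) (hUV : U * V = 1) (hVU : V * U = 1)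
    (g : Fin n → ℝ) : ∀ k : ℕ,
    chebR k (U * diagonal g * V) = U * diagonal (fun i => chebR k (g i)) * V := by
  intro k
  induction k using Nat.strong_induction_on with
  | _ k ih =>
    match k with
    | 0 =>
      show (1 : Matrix (Fin n) (Fin n) ℝ) = _
      simp only [chebR, diagonal_one]
      rw [mul_one, hUV]
    | 1 => rfl
    | (m+2) =>
      have key : ∀ A B : Fin n → ℝ,
          (U * diagonal A * V) * (U * diagonal B * V) = U * diagonal (fun i => A i * B i) * V := by
        intro A B
        calc (U * diagonal A * V) * (U * diagonal B * V)
            = U * diagonal A * (V * U) * diagonal B * V := by noncomm_ring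
          _ = U * (diagonal A * diagonal B) * V := by rw [hVU]; noncomm_ring
          _ = U * diagonal (fun i => A i * B i) * V := by rw [diagonal_mul_diagonal]
      show 2 * (U * diagonal g * V) * chebR (m+1) (U * diagonal g * V)
          - chebR m (U * diagonal g * V) = _
      rw [ih (m+1) (by omega), ih m (by omega), two_mul, add_mul, key]
      have hd : diagonal (fun i => chebR (m+2) (g i))
          = diagonal (fun i => g i * chebR (m+1) (g i))
            + diagonal (fun i => g i * chebR (m+1) (g i))
            - diagonal (fun i => chebR m (g i)) := by
        rw [diagonal_add, diagonal_sub]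
        exact congrArg diagonal (funext fun i => by
          show (2 * g i * chebR (m+1) (g i) - chebR m (g i))
            = g i * chebR (m+1) (g i) + g i * chebR (m+1) (g i) - chebR m (g i)
          ring)
      rw [hd]
      noncomm_ring

open Matrix in
lemma eig_conj {n : ℕ} (U V : Matrix (Fin n) (Fin n) ℝ) (hUV : U * V = 1) (hVU : V * U = 1)
    (f : Fin n → ℝ) (μ : ℝ) (v : Fin n → ℝ) (hv : v ≠ 0)
    (h : (U * diagonal f * V).mulVec v = μ • v) : ∃ i, f i = μ := by
  set y := V *ᵥ v with hy
  have hyv : U *ᵥ y = v := by rw [hy, mulVec_mulVec, hUV, one_mulVec]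
  have hy0 : y ≠ 0 := by
    intro h0; apply hv; rw [← hyv, h0, mulVec_zero]
  have h2 : diagonal f *ᵥ y = μ • y := by
    have h3 := congrArg (fun w => V *ᵥ w) h
    simp only [mulVec_mulVec, mulVec_smul] at h3
    rw [show V * (U * diagonal f * V) = diagonal f * V by
      rw [← Matrix.mul_assoc, ← Matrix.mul_assoc, hVU, Matrix.one_mul]] at h3
    rwa [← mulVec_mulVec] at h3
  obtain ⟨i, hi⟩ := Function.ne_iff.mp hy0
  have h4 := congrFun h2 i
  rw [mulVec_diagonal] at h4
  simp only [Pi.smul_apply, smul_eq_mul] at h4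
  exact ⟨i, mul_right_cancel₀ hi h4⟩

/-- With Lap a connected-graph Laplacian whose nonzero eigenvalues lie in
[λ₂, λₙ] (0 < λ₂ < λₙ), c₁ = (1 + λ₂/λₙ)/(1 − λ₂/λₙ), c₂ = 2/((1 + λ₂/λₙ)λₙ), the
condition number of P_k(c₂·Lap) on (span{1ₙ})^⊥, i.e. the ratio of any two nonzero
eigenvalues, is at most (1 + 1/T_k(c₁))/(1 − 1/T_k(c₁)). -/
theorem stmt16 {n : ℕ} (Lap : Matrix (Fin n) (Fin n) ℝ)
    (hsymm : Lap.IsSymm) (hpsd : Lap.PosSemidef)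
    (hker : ∀ v : Fin n → ℝ, Lap.mulVec v = 0 ↔ ∃ a : ℝ, v = fun _ => a)
    (lam2 lamn : ℝ) (h2 : 0 < lam2) (h2n : lam2 < lamn)
    (heig : ∀ μ : ℝ, (∃ v : Fin n → ℝ, v ≠ 0 ∧ Lap.mulVec v = μ • v) →
      μ = 0 ∨ (lam2 ≤ μ ∧ μ ≤ lamn))
    (c₁ c₂ : ℝ)
    (hc₁ : c₁ = (1 + lam2 / lamn) / (1 - lam2 / lamn))
    (hc₂ : c₂ = 2 / ((1 + lam2 / lamn) * lamn))
    (k : ℕ) (hk : 1 ≤ k)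
    (PkL : Matrix (Fin n) (Fin n) ℝ)
    (hPkL : PkL = (1 : Matrix (Fin n) (Fin n) ℝ)
      - (chebR k c₁)⁻¹ • chebR k (c₁ • ((1 : Matrix (Fin n) (Fin n) ℝ) - c₂ • Lap))) :
    ∀ μ ν : ℝ,
      (∃ v : Fin n → ℝ, v ≠ 0 ∧ PkL.mulVec v = μ • v) → μ ≠ 0 →
      (∃ w : Fin n → ℝ, w ≠ 0 ∧ PkL.mulVec w = ν • w) → ν ≠ 0 →
      μ ≤ ((1 + 1 / chebR k c₁) / (1 - 1 / chebR k c₁)) * ν := by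
  intro μ ν hμv hμ0 hνw hν0
  have hln : 0 < lamn := lt_trans h2 h2n
  set r := lam2 / lamn with hrdef
  have hr0 : 0 < r := div_pos h2 hln
  have hr1 : r < 1 := (div_lt_one hln).mpr h2n
  have h1r : (0:ℝ) < 1 - r := by linarith
  have h1r' : (0:ℝ) < 1 + r := by linarith
  have hc1gt : 1 < c₁ := by rw [hc₁, lt_div_iff₀ h1r]; linarith
  have hT1 : 1 < chebR k c₁ := lt_of_lt_of_le hc1gt (le_chebR hc1gt.le hk)
  have hTpos : (0:ℝ) < chebR k c₁ := by linarith
  have hTne : chebR k c₁ ≠ 0 := ne_of_gt hTpos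
  -- spectral setup
  have hA : Lap.IsHermitian := hpsd.1
  set U : Matrix (Fin n) (Fin n) ℝ := (hA.eigenvectorUnitary : Matrix (Fin n) (Fin n) ℝ) with hUdef
  set d : Fin n → ℝ := hA.eigenvalues with hddef
  have hUV : U * star U = 1 := Matrix.mem_unitaryGroup_iff.mp hA.eigenvectorUnitary.2
  have hVU : star U * U = 1 := Matrix.mem_unitaryGroup_iff'.mp hA.eigenvectorUnitary.2
  have hspec : Lap = U * Matrix.diagonal d * star U := by
    have := hA.spectral_theorem
    simpa [RCLike.ofReal_real_eq_id] using this
  have h1 : (1 : Matrix (Fin n) (Fin n) ℝ) = U * Matrix.diagonal (fun _ => (1:ℝ)) * star U := by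
    rw [show Matrix.diagonal (fun _ => (1:ℝ)) = 1 from Matrix.diagonal_one, mul_one, hUV]
  have hrep : c₁ • ((1 : Matrix (Fin n) (Fin n) ℝ) - c₂ • Lap)
      = U * Matrix.diagonal (fun i => c₁ * (1 - c₂ * d i)) * star U := by
    have step1 : (1 : Matrix (Fin n) (Fin n) ℝ) - c₂ • Lap
        = U * (Matrix.diagonal (fun _ => (1:ℝ)) - c₂ • Matrix.diagonal d) * star U := by
      rw [Matrix.mul_sub, Matrix.sub_mul, mul_smul_comm, smul_mul_assoc, ← hspec, ← h1]
    rw [step1, ← smul_mul_assoc, ← mul_smul_comm]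
    congr 1
    congr 1
    ext i j
    rcases eq_or_ne i j with h | h
    · subst h; simp [Matrix.diagonal_apply_eq]; try ring
    · simp [Matrix.diagonal_apply_ne _ h, Matrix.one_apply_ne h]
  set f : Fin n → ℝ := fun i => 1 - (chebR k c₁)⁻¹ * chebR k (c₁ * (1 - c₂ * d i)) with hfdef
  have hPrep : PkL = U * Matrix.diagonal f * star U := by
    rw [hPkL, hrep, chebR_conj U (star U) hUV hVU, h1, ← smul_mul_assoc, ← mul_smul_comm,
      ← Matrix.sub_mul, ← Matrix.mul_sub]
    congr 1
    congr 1
    ext i j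
    rcases eq_or_ne i j with h | h
    · subst h; simp [Matrix.diagonal_apply_eq, hfdef]; try ring
    · simp [Matrix.diagonal_apply_ne _ h, Matrix.one_apply_ne h]
  -- key bound
  have hbound : ∀ μ' : ℝ, (∃ v : Fin n → ℝ, v ≠ 0 ∧ PkL.mulVec v = μ' • v) → μ' ≠ 0 →
      1 - (chebR k c₁)⁻¹ ≤ μ' ∧ μ' ≤ 1 + (chebR k c₁)⁻¹ := by
    rintro μ' ⟨v, hv, hmv⟩ hne
    rw [hPrep] at hmv
    obtain ⟨i, hi⟩ := eig_conj U (star U) hUV hVU f μ' v hv hmv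
    have hev : Lap.mulVec ⇑(hA.eigenvectorBasis i) = d i • ⇑(hA.eigenvectorBasis i) :=
      hA.mulVec_eigenvectorBasis i
    have hvne : ⇑(hA.eigenvectorBasis i) ≠ (0 : Fin n → ℝ) := by
      intro h0
      have hb : hA.eigenvectorBasis i = 0 := by
        ext j; exact congrFun h0 j
      have := hA.eigenvectorBasis.orthonormal.1 i
      rw [hb, norm_zero] at this
      norm_num at this
    rcases heig (d i) ⟨_, hvne, hev⟩ with h0 | ⟨hl, hu⟩
    · exfalso
      apply hne
      rw [← hi, hfdef]
      simp only [h0]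
      rw [show c₁ * (1 - c₂ * 0) = c₁ by ring, inv_mul_cancel₀ hTne]
      ring
    · set t := c₁ * (1 - c₂ * d i) with htdef
      have hlam2 : lam2 = r * lamn := by rw [hrdef, div_mul_cancel₀ _ (ne_of_gt hln)]
      have hcA : c₁ * (1 - r) = 1 + r := by
        rw [hc₁]; field_simp
      have hcB : c₂ * ((1 + r) * lamn) = 2 := by
        rw [hc₂]; field_simp
      have hc2pos : 0 < c₂ := by
        rw [hc₂]; positivity
      have hc1pos : (0:ℝ) < c₁ := by linarith
      have ht2 : t ≤ 1 := by
        rw [htdef]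
        have hd1 : c₂ * d i ≥ c₂ * (r * lamn) := by
          apply mul_le_mul_of_nonneg_left _ hc2pos.le
          rw [← hlam2]; exact hl
        nlinarith
      have ht1 : -1 ≤ t := by
        rw [htdef]
        have hd2 : c₂ * d i ≤ c₂ * lamn := mul_le_mul_of_nonneg_left hu hc2pos.le
        nlinarith
      have habs := abs_chebR_le ht1 ht2 k
      rw [abs_le] at habs
      obtain ⟨ha1, ha2⟩ := habs
      have hiTpos : (0:ℝ) < (chebR k c₁)⁻¹ := by positivity
      rw [← hi, hfdef]
      constructor
      · simp only
        nlinarith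
      · simp only
        nlinarith
  obtain ⟨hμl, hμu⟩ := hbound μ hμv hμ0
  obtain ⟨hνl, hνu⟩ := hbound ν hνw hν0
  have hi1 : (chebR k c₁)⁻¹ < 1 := by
    rw [inv_lt_one_iff₀]; right; exact hT1
  have h1i : (0:ℝ) < 1 - (chebR k c₁)⁻¹ := by linarith
  rw [one_div]
  have hratio : (0:ℝ) ≤ (1 + (chebR k c₁)⁻¹) / (1 - (chebR k c₁)⁻¹) := by positivity
  calc μ ≤ 1 + (chebR k c₁)⁻¹ := hμu
    _ = (1 + (chebR k c₁)⁻¹) / (1 - (chebR k c₁)⁻¹) * (1 - (chebR k c₁)⁻¹) := by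
        rw [div_mul_cancel₀ _ (ne_of_gt h1i)]
    _ ≤ (1 + (chebR k c₁)⁻¹) / (1 - (chebR k c₁)⁻¹) * ν :=
        mul_le_mul_of_nonneg_left hνl hratio
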